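/- arXiv:2407.09160 — 3 statements merged into one kernel-verified Lean document; each statement's English description precedes it below -/
import Mathlib

section
/- For any two positive integers p, q and any two matroids M, N on the same finite ground set V, there exist sets A_1,…,A_p independent in M and B_1,…,B_q independent in N such that Σ_{i=1}^p |A_i| = Σ_{j=1}^q |B_j| = ν_{p,q}(M,N) and every v ∈ V satisfies #v(A_1,…,A_p) = #v(B_1,…,B_q). -/
/-- A matroid on a finite ground set `V`, identified with its collection of
independent sets (here given as a predicate on `Finset V`). -/
structure FinMatroid (V : Type*) [DecidableEq V] where
  Indep : Finset V → Prop
  empty_indep : Indep ∅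
  subset_indep : ∀ ⦃S T : Finset V⦄, Indep T → S ⊆ T → Indep S
  augment : ∀ ⦃S T : Finset V⦄, Indep S → Indep T → S.card < T.card →
    ∃ v ∈ T, v ∉ S ∧ Indep (insert v S)

/-- `#v(A_1, …, A_k)`: the number of indices `i` with `v ∈ A i`. -/
def cnt {V : Type*} [DecidableEq V] {k : ℕ} (A : Fin k → Finset V) (v : V) : ℕ :=
  (Finset.univ.filter fun i => v ∈ A i).card

/-- The combinatorial parameter `ν_{p,q}(M,N)`: the maximum over choices of
`A_1, …, A_p` independent in `M` and `B_1, …, B_q` independent in `N` of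
`Σ_{v ∈ V} min (#v(A_1,…,A_p)) (#v(B_1,…,B_q))`.  Here the two collections of
independent sets are given as predicates `MI`, `NI` on `Finset V`. -/
noncomputable def nu {V : Type*} [DecidableEq V] [Fintype V] (p q : ℕ)
    (MI NI : Finset V → Prop) : ℕ :=
  sSup {n | ∃ (A : Fin p → Finset V) (B : Fin q → Finset V),
    (∀ i, MI (A i)) ∧ (∀ j, NI (B j)) ∧
    n = ∑ v : V, min (cnt A v) (cnt B v)}

lemma sum_card_eq_sum_cnt {V : Type*} [DecidableEq V] [Fintype V] {k : ℕ}
    (A : Fin k → Finset V) : (∑ i, (A i).card) = ∑ v : V, cnt A v := by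
  have h : ∀ i, (A i).card = ∑ v : V, if v ∈ A i then 1 else 0 := by
    intro i
    rw [← Finset.card_filter, Finset.filter_univ_mem]
  simp only [h, cnt, Finset.card_filter]
  exact Finset.sum_comm

/-- For any positive integers `p, q` and matroids `M, N` on the same finite ground
set, `ν_{p,q}(M,N)` is attained by families `A_1,…,A_p ∈ M`, `B_1,…,B_q ∈ N` with
`Σᵢ |Aᵢ| = Σⱼ |Bⱼ| = ν_{p,q}(M,N)` and `#v(A_1,…,A_p) = #v(B_1,…,B_q)` for all `v`. -/
theorem nu_exists_balanced {V : Type*} [DecidableEq V] [Fintype V] (p q : ℕ)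
    (hp : 0 < p) (hq : 0 < q) (M N : FinMatroid V) :
    ∃ (A : Fin p → Finset V) (B : Fin q → Finset V),
      (∀ i, M.Indep (A i)) ∧ (∀ j, N.Indep (B j)) ∧
      (∑ i, (A i).card) = nu p q M.Indep N.Indep ∧
      (∑ j, (B j).card) = nu p q M.Indep N.Indep ∧
      ∀ v : V, cnt A v = cnt B v := by
  set S : Set ℕ := {n | ∃ (A : Fin p → Finset V) (B : Fin q → Finset V),
    (∀ i, M.Indep (A i)) ∧ (∀ j, N.Indep (B j)) ∧
    n = ∑ v : V, min (cnt A v) (cnt B v)} with hS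
  have h0 : (0 : ℕ) ∈ S := by
    refine ⟨fun _ => ∅, fun _ => ∅, fun _ => M.empty_indep, fun _ => N.empty_indep, ?_⟩
    simp [cnt]
  have hbdd : BddAbove S := by
    refine ⟨p * Fintype.card V, ?_⟩
    rintro n ⟨A, B, hA, hB, rfl⟩
    calc ∑ v : V, min (cnt A v) (cnt B v) ≤ ∑ _v : V, p := by
          refine Finset.sum_le_sum fun v _ => ?_
          refine le_trans (min_le_left _ _) ?_
          exact le_trans (Finset.card_filter_le _ _) (by simp)
      _ = p * Fintype.card V := by simp [mul_comm]
  have hmem : nu p q M.Indep N.Indep ∈ S := Nat.sSup_mem ⟨0, h0⟩ hbdd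
  obtain ⟨A, B, hA, hB, hn⟩ := hmem
  choose T hTsub hTcard using fun v : V =>
    Finset.exists_subset_card_eq (s := Finset.univ.filter fun i => v ∈ A i)
      (n := min (cnt A v) (cnt B v)) (min_le_left _ _)
  choose U hUsub hUcard using fun v : V =>
    Finset.exists_subset_card_eq (s := Finset.univ.filter fun j => v ∈ B j)
      (n := min (cnt A v) (cnt B v)) (min_le_right _ _)
  set A' : Fin p → Finset V := fun i => (A i).filter (fun v => i ∈ T v) with hA'
  set B' : Fin q → Finset V := fun j => (B j).filter (fun v => j ∈ U v) with hB'
  have hcntA : ∀ v, cnt A' v = min (cnt A v) (cnt B v) := by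
    intro v
    rw [← hTcard v]
    unfold cnt
    congr 1
    ext i
    simp only [hA', Finset.mem_filter, Finset.mem_univ, true_and]
    constructor
    · rintro ⟨_, h⟩; exact h
    · intro h
      have := hTsub v h
      simp only [Finset.mem_filter, Finset.mem_univ, true_and] at this
      exact ⟨this, h⟩
  have hcntB : ∀ v, cnt B' v = min (cnt A v) (cnt B v) := by
    intro v
    rw [← hUcard v]
    unfold cnt
    congr 1
    ext j
    simp only [hB', Finset.mem_filter, Finset.mem_univ, true_and]
    constructor
    · rintro ⟨_, h⟩; exact h
    · intro h
      have := hUsub v h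
      simp only [Finset.mem_filter, Finset.mem_univ, true_and] at this
      exact ⟨this, h⟩
  refine ⟨A', B', fun i => M.subset_indep (hA i) (Finset.filter_subset _ _),
    fun j => N.subset_indep (hB j) (Finset.filter_subset _ _), ?_, ?_, fun v => by
      rw [hcntA v, hcntB v]⟩
  · rw [sum_card_eq_sum_cnt]
    simp only [hcntA]
    rw [hn]
  · rw [sum_card_eq_sum_cnt]
    simp only [hcntB]
    rw [hn]
end

section
/- If M and N are matroids on a common finite ground set, then for every positive integer q, ν_{1,1}(M,N) ≥ ⌈ν_{q,q}(M,N)/q⌉; equivalently, q·ν_{1,1}(M,N) ≥ ν_{q,q}(M,N). -/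
set_option maxHeartbeats 1000000

section Aux

variable {V : Type*} [DecidableEq V]

open Classical in
noncomputable def rk (M : FinMatroid V) (S : Finset V) : ℕ :=
  (S.powerset.filter fun T => M.Indep T).sup Finset.card

open Classical in
lemma card_le_rk {M : FinMatroid V} {I S : Finset V} (hI : M.Indep I) (hIS : I ⊆ S) :
    I.card ≤ rk M S :=
  Finset.le_sup (by simp [Finset.mem_filter, Finset.mem_powerset, hI, hIS])

open Classical in
lemma exists_basis (M : FinMatroid V) (S : Finset V) :
    ∃ I, I ⊆ S ∧ M.Indep I ∧ I.card = rk M S := by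
  have hne : (S.powerset.filter fun T => M.Indep T).Nonempty :=
    ⟨∅, by simp [M.empty_indep]⟩
  obtain ⟨I, hI, hIsup⟩ := Finset.exists_mem_eq_sup _ hne Finset.card
  simp only [Finset.mem_filter, Finset.mem_powerset] at hI
  exact ⟨I, hI.1, hI.2, hIsup.symm⟩

lemma rk_mono (M : FinMatroid V) {S T : Finset V} (h : S ⊆ T) : rk M S ≤ rk M T := by
  obtain ⟨I, hIS, hInd, hIc⟩ := exists_basis M S
  rw [← hIc]; exact card_le_rk hInd (hIS.trans h)

lemma rk_empty (M : FinMatroid V) : rk M ∅ = 0 := by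
  obtain ⟨I, hIS, _, hIc⟩ := exists_basis M ∅
  rw [← hIc, Finset.subset_empty.mp hIS, Finset.card_empty]

lemma exists_basis_superset (M : FinMatroid V) {I S : Finset V}
    (hI : M.Indep I) (hIS : I ⊆ S) :
    ∃ J, I ⊆ J ∧ J ⊆ S ∧ M.Indep J ∧ J.card = rk M S := by
  obtain ⟨n, hn⟩ : ∃ n, rk M S - I.card = n := ⟨_, rfl⟩
  induction n generalizing I with
  | zero =>
    have h1 := card_le_rk hI hIS
    exact ⟨I, subset_rfl, hIS, hI, by omega⟩
  | succ n ihn =>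
    obtain ⟨K, hKS, hKind, hKcard⟩ := exists_basis M S
    obtain ⟨v, hvK, hvI, hins⟩ := M.augment hI hKind (by omega)
    have hsub : insert v I ⊆ S := Finset.insert_subset (hKS hvK) hIS
    have hcard : (insert v I).card = I.card + 1 := Finset.card_insert_of_notMem hvI
    obtain ⟨J, hIJ, hJS, hJind, hJcard⟩ := ihn hins hsub (by omega)
    exact ⟨J, (Finset.subset_insert v I).trans hIJ, hJS, hJind, hJcard⟩

lemma rk_submod (M : FinMatroid V) (A B : Finset V) :
    rk M (A ∪ B) + rk M (A ∩ B) ≤ rk M A + rk M B := by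
  obtain ⟨I, hIsub, hIind, hIcard⟩ := exists_basis M (A ∩ B)
  obtain ⟨J, hIJ, hJsub, hJind, hJcard⟩ :=
    exists_basis_superset M hIind (hIsub.trans Finset.inter_subset_union)
  have h1 : (J ∩ A).card ≤ rk M A :=
    card_le_rk (M.subset_indep hJind Finset.inter_subset_left) Finset.inter_subset_right
  have h2 : (J ∩ B).card ≤ rk M B :=
    card_le_rk (M.subset_indep hJind Finset.inter_subset_left) Finset.inter_subset_right
  have hU : (J ∩ A) ∪ (J ∩ B) = J := by
    rw [← Finset.inter_union_distrib_left]; exact Finset.inter_eq_left.mpr hJsub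
  have hI2 : I ⊆ (J ∩ A) ∩ (J ∩ B) := by
    intro x hx
    have hxAB := hIsub hx
    simp only [Finset.mem_inter] at hxAB ⊢
    exact ⟨⟨hIJ hx, hxAB.1⟩, hIJ hx, hxAB.2⟩
  have key := Finset.card_union_add_card_inter (J ∩ A) (J ∩ B)
  have hI3 : I.card ≤ ((J ∩ A) ∩ (J ∩ B)).card := Finset.card_le_card hI2
  rw [hU] at key
  omega

lemma rk_insert_of_loop {M : FinMatroid V} {v : V} (hv : ¬ M.Indep {v}) (X : Finset V) :
    rk M (insert v X) = rk M X := by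
  refine le_antisymm ?_ (rk_mono M (Finset.subset_insert v X))
  obtain ⟨J, hJS, hJind, hJc⟩ := exists_basis M (insert v X)
  have hvJ : v ∉ J := fun h => hv (M.subset_indep hJind (Finset.singleton_subset_iff.mpr h))
  have : J ⊆ X := by
    rw [Finset.subset_insert_iff] at hJS
    rwa [Finset.erase_eq_of_notMem hvJ] at hJS
  rw [← hJc]; exact card_le_rk hJind this

def contract (M : FinMatroid V) (v : V) (hv : M.Indep {v}) : FinMatroid V where
  Indep S := v ∉ S ∧ M.Indep (insert v S)
  empty_indep := ⟨Finset.notMem_empty v, by simpa using hv⟩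
  subset_indep := fun S T hT hST =>
    ⟨fun h => hT.1 (hST h), M.subset_indep hT.2 (Finset.insert_subset_insert _ hST)⟩
  augment := fun S T hS hT hcard => by
    obtain ⟨w, hwT, hwS, hwi⟩ := M.augment hS.2 hT.2 (by
      rw [Finset.card_insert_of_notMem hS.1, Finset.card_insert_of_notMem hT.1]; omega)
    have hwv : w ≠ v := by
      intro hh
      exact hwS (by rw [hh]; exact Finset.mem_insert_self _ S)
    have hwT' : w ∈ T := by
      rcases Finset.mem_insert.mp hwT with h | h
      · exact absurd h hwv
      · exact h
    refine ⟨w, hwT', fun h => hwS (Finset.mem_insert_of_mem h), ?_, ?_⟩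
    · intro h
      rcases Finset.mem_insert.mp h with h | h
      · exact hwv h.symm
      · exact hS.1 h
    · rwa [Finset.insert_comm] at hwi

lemma rk_insert_le_contract {M : FinMatroid V} {v : V} (hv : M.Indep {v}) (X : Finset V) :
    rk M (insert v X) ≤ rk (contract M v hv) X + 1 := by
  obtain ⟨J, hvJ, hJsub, hJind, hJcard⟩ :=
    exists_basis_superset M hv (Finset.singleton_subset_iff.mpr (Finset.mem_insert_self v X))
  have hvmem : v ∈ J := hvJ (Finset.mem_singleton_self v)
  have h1 : (contract M v hv).Indep (J.erase v) :=
    ⟨Finset.notMem_erase _ _, by rwa [Finset.insert_erase hvmem]⟩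
  have h2 : J.erase v ⊆ X := by
    intro x hx
    have hxv : x ≠ v := Finset.ne_of_mem_erase hx
    rcases Finset.mem_insert.mp (hJsub (Finset.mem_of_mem_erase hx)) with h | h
    · exact absurd h hxv
    · exact h
  have h3 := card_le_rk h1 h2
  rw [Finset.card_erase_of_mem hvmem] at h3
  have : 1 ≤ J.card := Finset.card_pos.mpr ⟨v, hvmem⟩
  omega

lemma sdiff_insert_eq {E X : Finset V} {v : V} :
    E \ insert v X = (E.erase v) \ X := by
  ext x
  simp only [Finset.mem_sdiff, Finset.mem_insert, Finset.mem_erase, not_or]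
  tauto

lemma sdiff_eq_insert {E X : Finset V} {v : V} (hvE : v ∈ E) (hvX : v ∉ X) :
    E \ X = insert v ((E.erase v) \ X) := by
  ext x
  simp only [Finset.mem_sdiff, Finset.mem_insert, Finset.mem_erase]
  constructor
  · rintro ⟨hxE, hxX⟩
    by_cases hxv : x = v
    · exact Or.inl hxv
    · exact Or.inr ⟨⟨hxv, hxE⟩, hxX⟩
  · rintro (rfl | ⟨⟨_, hxE⟩, hxX⟩)
    · exact ⟨hvE, hvX⟩
    · exact ⟨hxE, hxX⟩

theorem edmonds (E : Finset V) : ∀ (M N : FinMatroid V),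
    ∃ C X : Finset V, C ⊆ E ∧ X ⊆ E ∧ M.Indep C ∧ N.Indep C ∧
      rk M X + rk N (E \ X) ≤ C.card := by
  induction E using Finset.strongInduction with
  | _ E ih =>
  intro M N
  rcases E.eq_empty_or_nonempty with rfl | ⟨v, hv⟩
  · refine ⟨∅, ∅, subset_rfl, subset_rfl, M.empty_indep, N.empty_indep, ?_⟩
    simp [rk_empty]
  set E' := E.erase v with hE'
  have hss : E' ⊂ E := Finset.erase_ssubset hv
  have hvE' : v ∉ E' := Finset.notMem_erase v E
  have hE'E : E' ⊆ E := Finset.erase_subset v E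
  by_cases hvM : M.Indep {v}
  · by_cases hvN : N.Indep {v}
    · -- main case
      obtain ⟨C₁, X₁, hC₁E, hX₁E, hC₁M, hC₁N, hb₁⟩ := ih E' hss M N
      obtain ⟨C₂, X₂, hC₂E, hX₂E, hC₂ind, hC₂ind', hb₂⟩ :=
        ih E' hss (contract M v hvM) (contract N v hvN)
      obtain ⟨hvC₂, hC₂M⟩ := hC₂ind
      obtain ⟨_, hC₂N⟩ := hC₂ind'
      have hvX₁ : v ∉ X₁ := fun h => hvE' (hX₁E h)
      have hvX₂ : v ∉ X₂ := fun h => hvE' (hX₂E h)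
      -- contraction rank bounds
      have h2M : rk M (insert v X₂) ≤ rk (contract M v hvM) X₂ + 1 :=
        rk_insert_le_contract hvM X₂
      have h2N : rk N (insert v (E' \ X₂)) ≤ rk (contract N v hvN) (E' \ X₂) + 1 :=
        rk_insert_le_contract hvN (E' \ X₂)
      -- submodularity for M
      have subM := rk_submod M X₁ (insert v X₂)
      have eM1 : X₁ ∪ insert v X₂ = insert v (X₁ ∪ X₂) := by
        ext x; simp only [Finset.mem_union, Finset.mem_insert]; tauto
      have eM2 : X₁ ∩ insert v X₂ = X₁ ∩ X₂ := by
        ext x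
        simp only [Finset.mem_inter, Finset.mem_insert]
        constructor
        · rintro ⟨hx1, rfl | hx2⟩
          · exact absurd hx1 hvX₁
          · exact ⟨hx1, hx2⟩
        · rintro ⟨hx1, hx2⟩; exact ⟨hx1, Or.inr hx2⟩
      rw [eM1, eM2] at subM
      -- submodularity for N
      have subN := rk_submod N (E' \ X₁) (insert v (E' \ X₂))
      have eN1 : (E' \ X₁) ∪ insert v (E' \ X₂) = E \ (X₁ ∩ X₂) := by
        rw [sdiff_eq_insert hv (fun h => hvX₁ (Finset.mem_inter.mp h).1)]
        ext x
        simp only [Finset.mem_union, Finset.mem_insert, Finset.mem_sdiff, Finset.mem_inter,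
          ← hE']
        tauto
      have eN2 : (E' \ X₁) ∩ insert v (E' \ X₂) = E \ insert v (X₁ ∪ X₂) := by
        rw [sdiff_insert_eq]
        ext x
        simp only [Finset.mem_inter, Finset.mem_insert, Finset.mem_sdiff, Finset.mem_union,
          not_or, ← hE']
        constructor
        · rintro ⟨⟨hxE, hx1⟩, rfl | ⟨_, hx2⟩⟩
          · exact absurd hxE hvE'
          · exact ⟨hxE, hx1, hx2⟩
        · rintro ⟨hxE, hx1, hx2⟩
          exact ⟨⟨hxE, hx1⟩, Or.inr ⟨hxE, hx2⟩⟩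
      rw [eN1, eN2] at subN
      -- identify E' \ (X₁ ∩ X₂)?  not needed; now the big inequality
      have hQE : insert v (X₁ ∪ X₂) ⊆ E :=
        Finset.insert_subset hv (Finset.union_subset (hX₁E.trans hE'E) (hX₂E.trans hE'E))
      have hPE : X₁ ∩ X₂ ⊆ E := fun x hx => hE'E (hX₁E (Finset.mem_inter.mp hx).1)
      have hEX₁ : E \ X₁ = insert v (E' \ X₁) := sdiff_eq_insert hv hvX₁
      -- but hb₁ is in terms of E' \ X₁ : rk N (E' \ X₁). Good, subN uses rk N (E' \ X₁) too.
      have hCv : insert v C₂ ⊆ E :=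
        Finset.insert_subset hv (hC₂E.trans hE'E)
      have hCvcard : (insert v C₂).card = C₂.card + 1 := Finset.card_insert_of_notMem hvC₂
      have hCvM : M.Indep (insert v C₂) := hC₂M
      have hCvN : N.Indep (insert v C₂) := hC₂N
      set P := X₁ ∩ X₂
      set Q := insert v (X₁ ∪ X₂)
      have key : rk M P + rk N (E \ P) + (rk M Q + rk N (E \ Q))
          ≤ C₁.card + (C₂.card + 1) + 1 := by omega
      rcases le_total (C₂.card + 1) C₁.card with hcc | hcc
      · by_cases hcP : rk M P + rk N (E \ P) ≤ C₁.card
        · exact ⟨C₁, P, hC₁E.trans hE'E, hPE, hC₁M, hC₁N, hcP⟩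
        · exact ⟨C₁, Q, hC₁E.trans hE'E, hQE, hC₁M, hC₁N, by omega⟩
      · by_cases hcP : rk M P + rk N (E \ P) ≤ C₂.card + 1
        · exact ⟨insert v C₂, P, hCv, hPE, hCvM, hCvN, by omega⟩
        · exact ⟨insert v C₂, Q, hCv, hQE, hCvM, hCvN, by omega⟩
    · -- v is a loop in N
      obtain ⟨C, X, hCE, hXE, hCM, hCN, hb⟩ := ih E' hss M N
      have hvX : v ∉ X := fun h => hvE' (hXE h)
      refine ⟨C, X, hCE.trans hE'E, hXE.trans hE'E, hCM, hCN, ?_⟩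
      rw [sdiff_eq_insert hv hvX, rk_insert_of_loop hvN]
      exact hb
  · -- v is a loop in M
    obtain ⟨C, X, hCE, hXE, hCM, hCN, hb⟩ := ih E' hss M N
    refine ⟨C, insert v X, hCE.trans hE'E, Finset.insert_subset hv (hXE.trans hE'E),
      hCM, hCN, ?_⟩
    rw [sdiff_insert_eq, rk_insert_of_loop hvM]
    exact hb

lemma cnt_le {k : ℕ} (A : Fin k → Finset V) (v : V) : cnt A v ≤ k := by
  simpa [cnt] using (Finset.card_filter_le Finset.univ fun i => v ∈ A i)

section
variable [Fintype V]

lemma nuSet_bddAbove (p q : ℕ) (MI NI : Finset V → Prop) :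
    BddAbove {n | ∃ (A : Fin p → Finset V) (B : Fin q → Finset V),
      (∀ i, MI (A i)) ∧ (∀ j, NI (B j)) ∧
      n = ∑ v : V, min (cnt A v) (cnt B v)} := by
  refine ⟨p * Fintype.card V, ?_⟩
  rintro n ⟨A, B, hA, hB, rfl⟩
  calc ∑ v : V, min (cnt A v) (cnt B v) ≤ ∑ _v : V, p :=
        Finset.sum_le_sum fun v _ => le_trans (min_le_left _ _) (cnt_le A v)
    _ = p * Fintype.card V := by rw [Finset.sum_const, Finset.card_univ, smul_eq_mul, mul_comm]

lemma sum_cnt_le {k : ℕ} (M : FinMatroid V) (A : Fin k → Finset V)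
    (hA : ∀ i, M.Indep (A i)) (X : Finset V) :
    ∑ v ∈ X, cnt A v ≤ k * rk M X := by
  have h1 : ∑ v ∈ X, cnt A v = ∑ i : Fin k, (X.filter (· ∈ A i)).card := by
    simp only [cnt, Finset.card_filter]
    rw [Finset.sum_comm]
  rw [h1]
  calc ∑ i : Fin k, (X.filter (· ∈ A i)).card ≤ ∑ _i : Fin k, rk M X := by
        refine Finset.sum_le_sum fun i _ => ?_
        exact card_le_rk (M.subset_indep (hA i) (fun x hx => (Finset.mem_filter.mp hx).2))
          (Finset.filter_subset _ _)
    _ = k * rk M X := by rw [Finset.sum_const, Finset.card_univ, smul_eq_mul, Fintype.card_fin]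

end

section
variable [Fintype V]

lemma card_le_nu_one_one {MI NI : Finset V → Prop} {C : Finset V}
    (hM : MI C) (hN : NI C) : C.card ≤ nu 1 1 MI NI := by
  have hcnt : ∀ v, cnt (fun _ : Fin 1 => C) v = if v ∈ C then 1 else 0 := by
    intro v
    simp only [cnt, Finset.filter_const]
    split <;> simp
  have hmem : C.card ∈ {n | ∃ (A : Fin 1 → Finset V) (B : Fin 1 → Finset V),
      (∀ i, MI (A i)) ∧ (∀ j, NI (B j)) ∧
      n = ∑ v : V, min (cnt A v) (cnt B v)} := by
    refine ⟨fun _ => C, fun _ => C, fun _ => hM, fun _ => hN, ?_⟩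
    simp only [hcnt, min_self]
    rw [Finset.sum_ite_mem, Finset.univ_inter, Finset.sum_const, smul_eq_mul, mul_one]
  exact le_csSup (nuSet_bddAbove 1 1 MI NI) hmem


end

end Aux

/-- For matroids `M, N` on a common finite ground set and any positive integer `q`,
`ν_{1,1}(M,N) ≥ ⌈ν_{q,q}(M,N) / q⌉`; equivalently, `q · ν_{1,1}(M,N) ≥ ν_{q,q}(M,N)`. -/
theorem nu_one_one_ge_ceil_nu_qq {V : Type*} [DecidableEq V] [Fintype V] (q : ℕ)
    (hq : 0 < q) (M N : FinMatroid V) :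
    (nu q q M.Indep N.Indep + q - 1) / q ≤ nu 1 1 M.Indep N.Indep ∧
    nu q q M.Indep N.Indep ≤ q * nu 1 1 M.Indep N.Indep := by

  have h2 : nu q q M.Indep N.Indep ≤ q * nu 1 1 M.Indep N.Indep := by
    refine csSup_le ⟨0, fun _ => ∅, fun _ => ∅, fun _ => M.empty_indep,
      fun _ => N.empty_indep, by simp [cnt]⟩ ?_
    rintro n ⟨A, B, hA, hB, rfl⟩
    obtain ⟨C, X, _, _, hCM, hCN, hb⟩ := edmonds Finset.univ M N
    have hsplit : ∑ v : V, min (cnt A v) (cnt B v)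
        = ∑ v ∈ Finset.univ \ X, min (cnt A v) (cnt B v)
          + ∑ v ∈ X, min (cnt A v) (cnt B v) :=
      (Finset.sum_sdiff (Finset.subset_univ X)).symm
    have hX : ∑ v ∈ X, min (cnt A v) (cnt B v) ≤ q * rk M X :=
      le_trans (Finset.sum_le_sum fun v _ => min_le_left _ _) (sum_cnt_le M A hA X)
    have hXc : ∑ v ∈ Finset.univ \ X, min (cnt A v) (cnt B v)
        ≤ q * rk N (Finset.univ \ X) :=
      le_trans (Finset.sum_le_sum fun v _ => min_le_right _ _) (sum_cnt_le N B hB _)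
    have hC : C.card ≤ nu 1 1 M.Indep N.Indep := card_le_nu_one_one hCM hCN
    calc ∑ v : V, min (cnt A v) (cnt B v)
        ≤ q * rk N (Finset.univ \ X) + q * rk M X := by omega
      _ = q * (rk M X + rk N (Finset.univ \ X)) := by ring
      _ ≤ q * C.card := Nat.mul_le_mul_left q hb
      _ ≤ q * nu 1 1 M.Indep N.Indep := Nat.mul_le_mul_left q hC
  refine ⟨?_, h2⟩
  have := (Nat.div_lt_iff_lt_mul hq).mpr
    (show nu q q M.Indep N.Indep + q - 1 < (nu 1 1 M.Indep N.Indep + 1) * q by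
      have : (nu 1 1 M.Indep N.Indep + 1) * q = q * nu 1 1 M.Indep N.Indep + q := by ring
      omega)
  omega
end

section
/- Let M_1,…,M_k be matroids on the same finite ground set V, let H = (V, circ(M_1) ∪ … ∪ circ(M_k)), let v ∈ V, and let C_1,…,C_t be all the circuits C of M_1 such that v ∈ C and C is independent in M_i for every i ∈ {2,…,k}. Then the independent sets of the hypergraph obtained from H by deleting the edges C_1,…,C_t are exactly the sets S ⊆ V such that S \ {v} is independent in M_1 and S is independent in each of M_2,…,M_k. -/
/-- `C` is a circuit of the matroid `M`: a minimal dependent set. -/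
def IsCircuit {V : Type*} [DecidableEq V] (M : FinMatroid V) (C : Finset V) : Prop :=
  ¬ M.Indep C ∧ ∀ x ∈ C, M.Indep (C.erase x)

/-- The set of circuits of a matroid, i.e. the edge set of its circuit
representation as a hypergraph. -/
def circSet {V : Type*} [DecidableEq V] (M : FinMatroid V) : Set (Finset V) :=
  {C | IsCircuit M C}

/-- A set `S` is independent in the hypergraph with edge set `E` if no edge is
contained in `S`. -/
def HypIndep {V : Type*} (E : Set (Finset V)) (S : Finset V) : Prop :=
  ∀ e ∈ E, ¬ e ⊆ S

/-- The edge set of the contraction `H / X` of a hypergraph with edge set `E`: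
`{e \ X : e ∈ E, e ⊄ X}`. -/
def contractE {V : Type*} [DecidableEq V] (E : Set (Finset V)) (X : Finset V) :
    Set (Finset V) :=
  {f | ∃ e ∈ E, ¬ e ⊆ X ∧ f = e \ X}

lemma exists_circuit_subset {V : Type*} [DecidableEq V] (M : FinMatroid V)
    (T : Finset V) (hT : ¬ M.Indep T) : ∃ C ⊆ T, IsCircuit M C := by
  classical
  induction T using Finset.strongInduction with
  | _ T ih =>
    by_cases h : ∀ x ∈ T, M.Indep (T.erase x)
    · exact ⟨T, subset_rfl, hT, h⟩
    · push_neg at h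
      obtain ⟨x, hx, hdep⟩ := h
      obtain ⟨C, hCsub, hC⟩ := ih (T.erase x) (Finset.erase_ssubset hx) hdep
      exact ⟨C, hCsub.trans (Finset.erase_subset _ _), hC⟩

/-- Equation (1) of the Claim: with `H = (V, circ(M_1) ∪ … ∪ circ(M_k))`, `v ∈ V`,
and `C_1,…,C_t` all circuits of `M_1` containing `v` and independent in each
`M_2,…,M_k`, the independent sets of `H − C_1 − ⋯ − C_t` are exactly the sets `S`
with `S \ {v}` independent in `M_1` and `S` independent in each of `M_2,…,M_k`.
(Here `M_1` is `M 0` and `M_2,…,M_k` are the `M i` with `i ≠ 0`.) -/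
theorem indep_delete_circuits_through_v {V : Type*} [DecidableEq V] [Fintype V]
    (k : ℕ) (M : Fin (k + 1) → FinMatroid V) (v : V) :
    ∀ S : Finset V,
      HypIndep ((⋃ i, circSet (M i)) \
          {C | IsCircuit (M 0) C ∧ v ∈ C ∧ ∀ i, i ≠ 0 → (M i).Indep C}) S ↔
        ((M 0).Indep (S.erase v) ∧ ∀ i, i ≠ 0 → (M i).Indep S) := by
  intro S
  constructor
  · intro hS
    constructor
    · by_contra hdep
      obtain ⟨C, hCsub, hC⟩ := exists_circuit_subset (M 0) _ hdep
      have hvC : v ∉ C := fun hv => (Finset.mem_erase.mp (hCsub hv)).1 rfl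
      exact hS C ⟨Set.mem_iUnion.mpr ⟨0, hC⟩, fun h => hvC h.2.1⟩
        (hCsub.trans (Finset.erase_subset _ _))
    · intro i hi
      by_contra hdep
      obtain ⟨C, hCsub, hC⟩ := exists_circuit_subset (M i) _ hdep
      refine hS C ⟨Set.mem_iUnion.mpr ⟨i, hC⟩, fun h => hC.1 (h.2.2 i hi)⟩ hCsub
  · rintro ⟨h0, hrest⟩ e ⟨heU, heD⟩ hesub
    obtain ⟨i, hei⟩ := Set.mem_iUnion.mp heU
    by_cases hi : i = 0
    · subst hi
      by_cases hv : v ∈ e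
      · simp only [Set.mem_setOf_eq, not_and, not_forall] at heD
        obtain ⟨j, hj, hjdep⟩ := heD hei hv
        exact hjdep ((M j).subset_indep (hrest j hj) hesub)
      · exact hei.1 ((M 0).subset_indep h0 (fun x hx =>
          Finset.mem_erase.mpr ⟨fun h => hv (h ▸ hx), hesub hx⟩))
    · exact hei.1 ((M i).subset_indep (hrest i hi) hesub)
end
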